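/- Let q : I → M_ν(ℂ) be a twice differentiable matrix-valued function on an interval I near 0 satisfying the Euler–Lagrange equation q̈ = E q̇ + F q, and define p := (1/2)A⁻¹q̇ + Bq on I. Then (q,p) satisfies the Hamiltonian equations q̇ = 2A(p − Bq) and ṗ = 2 ᵗB A (p − Bq) + 2Cq on I. -/

import Mathlib

open Matrix Set

attribute [local instance] Matrix.linftyOpNormedAddCommGroup Matrix.linftyOpNormedRing
  Matrix.linftyOpNormedAlgebra

noncomputable section

abbrev Mat (ν : ℕ) := Matrix (Fin ν) (Fin ν) ℂ

/-- `E(t) := Ȧ(t)A(t)⁻¹ + 2A(t)(ᵗB(t) − B(t))` (real time variable). -/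
def EcoefR {ν : ℕ} (A B : ℝ → Mat ν) (t : ℝ) : Mat ν :=
  deriv A t * (A t)⁻¹ + (2 : ℂ) • (A t * ((B t)ᵀ - B t))

/-- `F(t) := 4A(t)C(t) − 2A(t)Ḃ(t)` (real time variable). -/
def FcoefR {ν : ℕ} (A B C : ℝ → Mat ν) (t : ℝ) : Mat ν :=
  (4 : ℂ) • (A t * C t) - (2 : ℂ) • (A t * deriv B t)

/-- The conjugate momentum `p := (1/2)·A⁻¹·q̇ + B·q`. -/
def pmom {ν : ℕ} (A B : ℝ → Mat ν) (q : ℝ → Mat ν) (s : ℝ) : Mat ν :=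
  (2 : ℂ)⁻¹ • ((A s)⁻¹ * deriv q s) + B s * q s

theorem statement4 (ν : ℕ) (hν : 1 ≤ ν) (A B C : ℝ → Mat ν)
    (U : Set ℝ) (hU : U ∈ nhds (0 : ℝ)) (hUopen : IsOpen U)
    (hA : AnalyticOnNhd ℝ A U) (hB : AnalyticOnNhd ℝ B U) (hC : AnalyticOnNhd ℝ C U)
    (hAsymm : ∀ t ∈ U, (A t).IsSymm) (hCsymm : ∀ t ∈ U, (C t).IsSymm)
    (hAinv : ∀ t ∈ U, IsUnit (A t))
    (I : Set ℝ) (hIU : I ⊆ U) (hIopen : IsOpen I) (hI0 : (0 : ℝ) ∈ I)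
    (q : ℝ → Mat ν)
    (hq1 : ∀ s ∈ I, DifferentiableAt ℝ q s)
    (hq2 : ∀ s ∈ I, DifferentiableAt ℝ (deriv q) s)
    (hEL : ∀ s ∈ I, deriv (deriv q) s = EcoefR A B s * deriv q s + FcoefR A B C s * q s) :
    ∀ s ∈ I,
      deriv q s = (2 : ℂ) • (A s * (pmom A B q s - B s * q s)) ∧
      deriv (pmom A B q) s =
        (2 : ℂ) • ((B s)ᵀ * (A s * (pmom A B q s - B s * q s)))
          + (2 : ℂ) • (C s * q s) := by
  intro s hs
  have hsU : s ∈ U := hIU hs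
  have hUs : U ∈ nhds s := hUopen.mem_nhds hsU
  have hAd : DifferentiableAt ℝ A s := (hA s hsU).differentiableAt
  have hBd : DifferentiableAt ℝ B s := (hB s hsU).differentiableAt
  set G : ℝ → Mat ν := fun t => (A t)⁻¹ with hG
  -- G agrees with Ring.inverse ∘ A near s
  have hGeq : G =ᶠ[nhds s] fun t => Ring.inverse (A t) := by
    filter_upwards [hUs] with t ht
    exact Matrix.nonsing_inv_eq_ringInverse (A t)
  have hGd : DifferentiableAt ℝ G s := by
    rw [hGeq.differentiableAt_iff]
    exact (differentiableAt_inverse (hAinv s hsU)).comp s hAd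
  -- A * G = 1 and G * A = 1 at points of U
  have hdetU : ∀ t ∈ U, IsUnit (A t).det := fun t ht =>
    (Matrix.isUnit_iff_isUnit_det (A t)).mp (hAinv t ht)
  have hAG : ∀ t ∈ U, A t * G t = 1 := fun t ht =>
    Matrix.mul_nonsing_inv (A t) (hdetU t ht)
  have hGA : ∀ t ∈ U, G t * A t = 1 := fun t ht =>
    Matrix.nonsing_inv_mul (A t) (hdetU t ht)
  -- derivative of G
  have hGAderiv : deriv (fun t => G t * A t) s = 0 := by
    have : (fun t => G t * A t) =ᶠ[nhds s] fun _ => (1 : Mat ν) := by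
      filter_upwards [hUs] with t ht using hGA t ht
    exact this.deriv_eq.trans (deriv_const _ _)
  have hGderiv : deriv G s = -(G s * deriv A s * G s) := by
    have h0 : deriv G s * A s + G s * deriv A s = 0 := by
      exact (deriv_fun_mul hGd hAd).symm.trans hGAderiv
    have h2 : deriv G s * (A s * G s) + G s * deriv A s * G s = 0 := by
      rw [← mul_assoc, ← add_mul, h0, zero_mul]
    rw [hAG s hsU, mul_one] at h2
    exact eq_neg_of_add_eq_zero_left h2
  -- first Hamilton equation
  have key1 : (2 : ℂ) • (A s * (pmom A B q s - B s * q s)) = deriv q s := by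
    simp only [pmom, add_sub_cancel_right, mul_smul_comm, smul_smul, ← mul_assoc,
      hAG s hsU, Matrix.mul_nonsing_inv _ (hdetU s hsU), one_mul]
    norm_num
  refine ⟨key1.symm, ?_⟩
  -- derivative of pmom
  have hq1' := (hq1 s hs).hasDerivAt
  have hq2' := (hq2 s hs).hasDerivAt
  have hp1 : HasDerivAt (fun t => (2:ℂ)⁻¹ • (G t * deriv q t))
      ((2:ℂ)⁻¹ • (deriv G s * deriv q s + G s * deriv (deriv q) s)) s :=
    by have h := (hGd.hasDerivAt.mul hq2').const_smul (2:ℂ)⁻¹; exact h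
  have hp2 : HasDerivAt (fun t => B t * q t) (deriv B s * q s + B s * deriv q s) s :=
    hBd.hasDerivAt.mul hq1'
  have hp : HasDerivAt (pmom A B q)
      ((2:ℂ)⁻¹ • (deriv G s * deriv q s + G s * deriv (deriv q) s)
        + (deriv B s * q s + B s * deriv q s)) s := hp1.add hp2
  rw [show deriv (pmom A B q) s = _ from hp.deriv, hEL s hs, hGderiv]
  -- rewrite the RHS using key1
  have key1' : (2 : ℂ) • ((B s)ᵀ * (A s * (pmom A B q s - B s * q s)))
      = (B s)ᵀ * deriv q s := by
    rw [← mul_smul_comm, key1]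
  rw [key1']
  -- now pure matrix algebra
  simp only [EcoefR, FcoefR]
  have hga := hGA s hsU
  have e1 : G s * (deriv A s * (A s)⁻¹) = G s * deriv A s * G s := by
    rw [mul_assoc]
  simp only [mul_add, add_mul, mul_sub, sub_mul, mul_smul_comm, smul_mul_assoc,
    smul_add, smul_sub, smul_smul, neg_mul, mul_neg, ← mul_assoc, hga, one_mul]
  module
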